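/- Let (t̄, x̄) ∈ ℝ × ℝⁿ, let π be a permutation of {1, …, n} with |x̄_{π(1)}| ≥ … ≥ |x̄_{π(n)}|, and suppose k ∈ {0, 1, …, n} satisfies |x̄_{π(k)}| > max{ (1/(k+1)) (−t̄ + ∑_{i=1}^k |x̄_{π(i)}|), 0 } ≥ |x̄_{π(k+1)}| (left inequality vacuous when k = 0, right inequality vacuous when k = n). Define t = max{ (1/(k+1)) (k t̄ + ∑_{i=1}^k |x̄_{π(i)}|), t̄ } and x_i = max(|x̄_i| − (t − t̄), 0) · sign(x̄_i) for i = 1, …, n. Then (t, x) is the Euclidean projection of (t̄, x̄) onto the ℓ₁-norm cone K_{ℓ₁}, i.e., (t, x) ∈ K_{ℓ₁} and ‖(t, x) − (t̄, x̄)‖ ≤ ‖(s, y) − (t̄, x̄)‖ for every (s, y) ∈ K_{ℓ₁}. -/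

import Mathlib

open Finset

/-- `absEntry x π j = |x_{π(j)}|` in the one-based indexing of the paper, i.e. for
`1 ≤ j ≤ n` it is the absolute value of the entry of `x` at `π` applied to the
`(j-1)`-th zero-based index (junk value `0` for out-of-range `j`). -/
noncomputable def absEntry {n : ℕ} (x : Fin n → ℝ) (π : Equiv.Perm (Fin n))
    (j : ℕ) : ℝ :=
  if h : j - 1 < n then |x (π ⟨j - 1, h⟩)| else 0

/-- The threshold `max{ (1/(k+1)) (−tb + ∑_{i=1}^k |x_{π(i)}|), 0 }`. -/
noncomputable def projThresh {n : ℕ} (tb : ℝ) (x : Fin n → ℝ)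
    (π : Equiv.Perm (Fin n)) (k : ℕ) : ℝ :=
  max ((-tb + ∑ j ∈ Finset.Icc 1 k, absEntry x π j) / ((k : ℝ) + 1)) 0


private lemma soft_abs (a lam : ℝ) (hlam : 0 ≤ lam) :
    |max (|a| - lam) 0 * Real.sign a| = max (|a| - lam) 0 := by
  rcases le_or_gt |a| lam with h | h
  · rw [max_eq_right (by linarith)]
    simp
  · have ha : a ≠ 0 := by
      intro h0
      rw [h0, abs_zero] at h
      linarith
    rw [max_eq_left (by linarith)]
    rcases ha.lt_or_gt with hneg | hpos
    · rw [Real.sign_of_neg hneg, abs_of_neg hneg] at *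
      rw [mul_neg_one, abs_neg, abs_of_nonneg (by linarith)]
    · rw [Real.sign_of_pos hpos, abs_of_pos hpos] at *
      rw [mul_one, abs_of_nonneg (by linarith)]

private lemma soft_dot_self (a lam : ℝ) (hlam : 0 ≤ lam) :
    (a - max (|a| - lam) 0 * Real.sign a) * (max (|a| - lam) 0 * Real.sign a)
      = lam * |max (|a| - lam) 0 * Real.sign a| := by
  rw [soft_abs a lam hlam]
  rcases le_or_gt |a| lam with h | h
  · rw [max_eq_right (by linarith)]
    ring
  · have ha : a ≠ 0 := by
      intro h0; rw [h0, abs_zero] at h; linarith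
    rw [max_eq_left (by linarith)]
    rcases ha.lt_or_gt with hneg | hpos
    · rw [Real.sign_of_neg hneg, abs_of_neg hneg]
      ring
    · rw [Real.sign_of_pos hpos, abs_of_pos hpos]
      ring

private lemma soft_dot_le (a lam w : ℝ) (hlam : 0 ≤ lam) :
    (a - max (|a| - lam) 0 * Real.sign a) * w ≤ lam * |w| := by
  rcases le_or_gt |a| lam with h | h
  · rw [max_eq_right (by linarith)]
    calc (a - 0 * Real.sign a) * w = a * w := by ring
      _ ≤ |a * w| := le_abs_self _
      _ = |a| * |w| := abs_mul a w
      _ ≤ lam * |w| := by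
          apply mul_le_mul_of_nonneg_right h (abs_nonneg w)
  · have ha : a ≠ 0 := by
      intro h0; rw [h0, abs_zero] at h; linarith
    rw [max_eq_left (by linarith)]
    rcases ha.lt_or_gt with hneg | hpos
    · rw [Real.sign_of_neg hneg, abs_of_neg hneg]
      have : (a - (-a - lam) * (-1)) * w = lam * (-w) := by ring
      rw [this]
      exact mul_le_mul_of_nonneg_left (neg_le_abs w) hlam
    · rw [Real.sign_of_pos hpos, abs_of_pos hpos]
      have : (a - (a - lam) * 1) * w = lam * w := by ring
      rw [this]
      exact mul_le_mul_of_nonneg_left (le_abs_self w) hlam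

/-- Let `(tb, xb) ∈ ℝ × ℝⁿ`, let `π` be a permutation with
`|xb_{π(1)}| ≥ … ≥ |xb_{π(n)}|`, and let `k ∈ {0, …, n}` satisfy
`|xb_{π(k)}| > max{ (1/(k+1))(−tb + ∑_{i=1}^k |xb_{π(i)}|), 0 } ≥ |xb_{π(k+1)}|`
(left inequality vacuous when `k = 0`, right inequality vacuous when `k = n`). Define
`t = max{ (1/(k+1))(k·tb + ∑_{i=1}^k |xb_{π(i)}|), tb }` and
`xᵢ = max(|xbᵢ| − (t − tb), 0) · sign(xbᵢ)`. Then `(t, x)` is the Euclidean projection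
of `(tb, xb)` onto the ℓ₁-norm cone `K_{ℓ₁} = {(t, x) : ‖x‖₁ ≤ t}`: it lies in the cone
and is at least as close to `(tb, xb)` as any other point of the cone. -/
theorem stmt17 {n : ℕ} (tb : ℝ) (xb : Fin n → ℝ) (π : Equiv.Perm (Fin n))
    (hsort : Antitone fun i : Fin n => |xb (π i)|)
    (k : ℕ) (hkn : k ≤ n)
    (hleft : 1 ≤ k → absEntry xb π k > projThresh tb xb π k)
    (hright : k < n → projThresh tb xb π k ≥ absEntry xb π (k + 1))
    (t : ℝ)
    (ht : t = max (((k : ℝ) * tb + ∑ j ∈ Finset.Icc 1 k, absEntry xb π j) /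
      ((k : ℝ) + 1)) tb)
    (x : Fin n → ℝ)
    (hx : ∀ i, x i = max (|xb i| - (t - tb)) 0 * Real.sign (xb i)) :
    (∑ i, |x i|) ≤ t ∧
    ∀ (s : ℝ) (y : Fin n → ℝ), (∑ i, |y i|) ≤ s →
      Real.sqrt ((t - tb) ^ 2 + ∑ i, (x i - xb i) ^ 2) ≤
      Real.sqrt ((s - tb) ^ 2 + ∑ i, (y i - xb i) ^ 2) := by
  set S := ∑ j ∈ Finset.Icc 1 k, absEntry xb π j with hS
  set lam := t - tb with hlam_def
  have hk1 : (0:ℝ) < (k : ℝ) + 1 := by positivity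
  -- lam equals the threshold
  have hlam_eq : lam = projThresh tb xb π k := by
    rw [hlam_def, ht, projThresh, ← max_sub_sub_right]
    congr 1
    · field_simp
      ring
    · simp
  have hlam0 : 0 ≤ lam := by rw [hlam_eq]; exact le_max_right _ _
  -- entries 1..k are strictly above lam
  have hbig : ∀ i : Fin n, (i : ℕ) < k → lam < |xb (π i)| := by
    intro i hik
    have hk1' : 1 ≤ k := Nat.one_le_iff_ne_zero.mpr (by omega)
    have hkn' : k - 1 < n := by omega
    have habs : absEntry xb π k = |xb (π ⟨k - 1, hkn'⟩)| := dif_pos hkn'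
    have hle : i ≤ (⟨k - 1, hkn'⟩ : Fin n) := by
      show (i : ℕ) ≤ k - 1
      omega
    have := hsort hle
    have h2 := hleft hk1'
    rw [habs] at h2
    rw [hlam_eq]
    exact lt_of_lt_of_le h2 this
  -- entries k+1..n are at most lam
  have hsmall : ∀ i : Fin n, k ≤ (i : ℕ) → |xb (π i)| ≤ lam := by
    intro i hik
    have hkn' : k < n := lt_of_le_of_lt hik i.isLt
    have habs : absEntry xb π (k + 1) = |xb (π ⟨k, hkn'⟩)| := by
      unfold absEntry
      rw [dif_pos (show k + 1 - 1 < n by omega)]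
      simp
    have hle : (⟨k, hkn'⟩ : Fin n) ≤ i := hik
    have h1 := hsort hle
    have h2 := hright hkn'
    rw [habs] at h2
    rw [hlam_eq]
    exact le_trans h1 h2
  -- sum formula
  have hxabs : ∀ i, |x i| = max (|xb i| - lam) 0 := by
    intro i
    rw [hx i]
    exact soft_abs _ _ hlam0
  set G : ℕ → ℝ := fun m => if h : m < n then |xb (π ⟨m, h⟩)| else 0 with hG
  have hIcc : S = ∑ m ∈ Finset.range k, G m := by
    rw [hS, ← Finset.Ico_add_one_right_eq_Icc, Finset.sum_Ico_eq_sum_range]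
    simp only [Nat.add_sub_cancel]
    apply Finset.sum_congr rfl
    intro m hm
    have hmn : m < n := by
      have := Finset.mem_range.mp hm
      omega
    unfold absEntry
    rw [dif_pos (show 1 + m - 1 < n by omega), hG]
    simp only [hmn, dif_pos]
    congr
    omega
  have hsum : ∑ i, |x i| = S - (k : ℝ) * lam := by
    have e1 : ∑ i, |x i| = ∑ i : Fin n, max (|xb (π i)| - lam) 0 := by
      calc ∑ i, |x i| = ∑ i : Fin n, max (|xb i| - lam) 0 :=
            Finset.sum_congr rfl fun i _ => hxabs i
        _ = ∑ i : Fin n, max (|xb (π i)| - lam) 0 :=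
            (Equiv.sum_comp π (fun i => max (|xb i| - lam) 0)).symm
    set F : ℕ → ℝ := fun m => if h : m < n then max (|xb (π ⟨m, h⟩)| - lam) 0 else 0 with hF
    have e2 : ∑ i : Fin n, max (|xb (π i)| - lam) 0 = ∑ m ∈ Finset.range n, F m := by
      rw [← Fin.sum_univ_eq_sum_range]
      apply Finset.sum_congr rfl
      intro i _
      rw [hF]
      simp only [i.isLt, dif_pos, Fin.eta]
    have e3 : ∑ m ∈ Finset.range k, F m + ∑ m ∈ Finset.Ico k n, F m
        = ∑ m ∈ Finset.range n, F m := by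
      rw [Finset.range_eq_Ico, Finset.range_eq_Ico]
      exact Finset.sum_Ico_consecutive F (Nat.zero_le k) hkn
    have e4 : ∑ m ∈ Finset.Ico k n, F m = 0 := by
      apply Finset.sum_eq_zero
      intro m hm
      obtain ⟨hm1, hm2⟩ := Finset.mem_Ico.mp hm
      rw [hF]
      simp only [hm2, dif_pos]
      exact max_eq_right (by linarith [hsmall ⟨m, hm2⟩ hm1])
    have e5 : ∑ m ∈ Finset.range k, F m = S - (k : ℝ) * lam := by
      have hterm : ∀ m ∈ Finset.range k, F m = G m - lam := by
        intro m hm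
        have hmk : m < k := Finset.mem_range.mp hm
        have hmn : m < n := by omega
        rw [hF, hG]
        simp only [hmn, dif_pos]
        exact max_eq_left (by linarith [hbig ⟨m, hmn⟩ hmk])
      rw [Finset.sum_congr rfl hterm, Finset.sum_sub_distrib, Finset.sum_const,
        Finset.card_range, hIcc, nsmul_eq_mul]
    rw [e1, e2, ← e3, e4, e5, add_zero]
  -- feasibility
  have hfeas : ∑ i, |x i| ≤ t := by
    have h1 : (-tb + S) / ((k : ℝ) + 1) ≤ lam := by
      rw [hlam_eq, projThresh]; exact le_max_left _ _
    have h2 : -tb + S ≤ ((k : ℝ) + 1) * lam := by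
      rw [div_le_iff₀ hk1] at h1; linarith
    rw [hsum]
    have : t = lam + tb := by rw [hlam_def]; ring
    rw [this]
    linarith
  -- complementary slackness
  have hcs : lam * (∑ i, |x i|) = lam * t := by
    rcases hlam0.eq_or_lt with h0 | h0
    · rw [← h0]; ring
    · have h1 : lam = (-tb + S) / ((k : ℝ) + 1) := by
        rcases le_or_gt ((-tb + S) / ((k : ℝ) + 1)) 0 with h | h
        · exfalso
          rw [hlam_eq, projThresh, max_eq_right h] at h0
          exact lt_irrefl 0 h0
        · rw [hlam_eq, projThresh, max_eq_left (le_of_lt h)]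
      have h2 : -tb + S = ((k : ℝ) + 1) * lam := by
        rw [h1]; field_simp
      have h3 : t = lam + tb := by rw [hlam_def]; ring
      rw [hsum, h3]
      have : S - (k : ℝ) * lam = lam + tb := by linarith
      rw [this]
  refine ⟨hfeas, ?_⟩
  intro s y hy
  have hs0 : 0 ≤ s := le_trans (Finset.sum_nonneg fun i _ => abs_nonneg _) hy
  -- key optimality inequality
  have key : ∑ i, (xb i - x i) * (y i - x i) ≤ lam * (s - t) := by
    have e1 : ∑ i, (xb i - x i) * (y i - x i)
        = ∑ i, (xb i - x i) * y i - ∑ i, (xb i - x i) * x i := by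
      rw [← Finset.sum_sub_distrib]
      exact Finset.sum_congr rfl fun i _ => by ring
    have e2 : ∑ i, (xb i - x i) * x i = lam * (∑ i, |x i|) := by
      rw [Finset.mul_sum]
      apply Finset.sum_congr rfl
      intro i _
      rw [hx i]
      exact soft_dot_self _ _ hlam0
    have e3 : ∑ i, (xb i - x i) * y i ≤ lam * s := by
      calc ∑ i, (xb i - x i) * y i ≤ ∑ i, lam * |y i| := by
            apply Finset.sum_le_sum
            intro i _
            rw [hx i]
            exact soft_dot_le _ _ _ hlam0
        _ = lam * ∑ i, |y i| := (Finset.mul_sum _ _ _).symm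
        _ ≤ lam * s := mul_le_mul_of_nonneg_left hy hlam0
    rw [e1, e2, hcs]
    linarith
  apply Real.sqrt_le_sqrt
  have hexp : ∑ i, (y i - xb i) ^ 2
      = ∑ i, (x i - xb i) ^ 2 + ∑ i, (y i - x i) ^ 2
        - 2 * ∑ i, (xb i - x i) * (y i - x i) := by
    rw [Finset.mul_sum, ← Finset.sum_add_distrib, ← Finset.sum_sub_distrib]
    exact Finset.sum_congr rfl fun i _ => by ring
  have hsq : ∑ i, (y i - x i) ^ 2 ≥ 0 := Finset.sum_nonneg fun i _ => sq_nonneg _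
  have hst : (s - tb) ^ 2 = (s - t) ^ 2 + lam ^ 2 + 2 * lam * (s - t) := by
    rw [hlam_def]; ring
  have hl2 : (t - tb) ^ 2 = lam ^ 2 := by rw [hlam_def]
  nlinarith [sq_nonneg (s - t)]
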